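/- Under the RLVR task-selection setup, if the learning rate satisfies η < 1/(4γ²), then for every iteration t ≥ 0 and every step s ∈ [S], it holds surely (for any realization of the training batch) that P_{t+1}(A_{s,τ(s)}) ≥ P_t(A_{s,τ(s)}) − 2ηγ². -/

import Mathlib

open scoped BigOperators RealInnerProductSpace ENNReal

noncomputable section

namespace RLVR

/-- Softmax distribution over a finite vocabulary. -/
def softmax {V : Type*} [Fintype V] (L : V → ℝ) (y : V) : ℝ :=
  Real.exp (L y) / ∑ w, Real.exp (L w)

variable {V : Type*} [Fintype V] [DecidableEq V] [Nonempty V]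
variable {P : Type*} [Fintype P]
variable {J S Bsz : ℕ}

/-- The model logits: `f_θ(x)[v] = Σ_j γ·1[σ_j(x) = v]·⟨h_{s,j}, θ⟩`, where the
positional index `s` records the number of already generated CoT tokens in `x`. -/
def model (γ : ℝ) (σ : Fin J → List V → V)
    (h : Fin S → Fin J → EuclideanSpace ℝ P)
    (θ : EuclideanSpace ℝ P) (s : Fin S) (x : List V) : V → ℝ :=
  fun v => ∑ j : Fin J, (if σ j x = v then γ else 0) * ⟪h s j, θ⟫

/-- The autoregressive policy `π_θ(y | x) = Softmax(f_θ(x))[y]`. -/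
def policy (γ : ℝ) (σ : Fin J → List V → V)
    (h : Fin S → Fin J → EuclideanSpace ℝ P)
    (θ : EuclideanSpace ℝ P) (s : Fin S) (x : List V) (y : V) : ℝ :=
  softmax (model γ σ h θ s x) y

/-- A trajectory: a prompt together with the `S` generated CoT tokens. -/
abbrev Traj (V : Type*) (S : ℕ) := List V × (Fin S → V)

/-- The prefix `x_n`: the prompt followed by the first `n` generated tokens. -/
def pref (ω : Traj V S) (n : ℕ) : List V := ω.1 ++ (List.ofFn ω.2).take n

/-- The full generated string `x_S`. -/
def fullStr (ω : Traj V S) : List V := ω.1 ++ List.ofFn ω.2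

/-- Density of a trajectory under prompt distribution `D` and parameters `θ`. -/
def dens (D : List V → ℝ) (γ : ℝ) (σ : Fin J → List V → V)
    (h : Fin S → Fin J → EuclideanSpace ℝ P) (θ : EuclideanSpace ℝ P)
    (ω : Traj V S) : ℝ :=
  D ω.1 * ∏ s : Fin S, policy γ σ h θ s (pref ω s.val) (ω.2 s)

/-- Probability `P_θ(E)` of an event `E` over trajectories. -/
def Pr (D : List V → ℝ) (γ : ℝ) (σ : Fin J → List V → V)
    (h : Fin S → Fin J → EuclideanSpace ℝ P) (θ : EuclideanSpace ℝ P)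
    (E : Set (Traj V S)) : ℝ :=
  ∑' ω : Traj V S, Set.indicator E (dens D γ σ h θ) ω

/-- Conditional probability `P_θ(E | F)`. -/
def condPr (D : List V → ℝ) (γ : ℝ) (σ : Fin J → List V → V)
    (h : Fin S → Fin J → EuclideanSpace ℝ P) (θ : EuclideanSpace ℝ P)
    (E F : Set (Traj V S)) : ℝ :=
  Pr D γ σ h θ (E ∩ F) / Pr D γ σ h θ F

/-- The event `A_{s,j}` that task `σ_j` is selected at step `s`. -/
def Av (σ : Fin J → List V → V) (s : Fin S) (j : Fin J) : Set (Traj V S) :=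
  {ω | ω.2 s = σ j (pref ω s.val)}

/-- The event that the verifier accepts the final string. -/
def VE (Verif : List V → Bool) : Set (Traj V S) :=
  {ω | Verif (fullStr ω) = true}

/-- The task-advantage ratio `ρ^θ_{s,j} = P_θ(V=1 | A_{s,j}) / P_θ(V=1 | A_{s,j}ᶜ)`,
valued in `ℝ≥0∞` (so that a vanishing denominator yields `∞`, matching the paper's
conventions). -/
def ratio (D : List V → ℝ) (γ : ℝ) (σ : Fin J → List V → V)
    (h : Fin S → Fin J → EuclideanSpace ℝ P) (Verif : List V → Bool)
    (θ : EuclideanSpace ℝ P) (s : Fin S) (j : Fin J) : ℝ≥0∞ :=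
  ENNReal.ofReal (condPr D γ σ h θ (VE Verif) (Av σ s j)) /
    ENNReal.ofReal (condPr D γ σ h θ (VE Verif) ((Av σ s j)ᶜ))

/-- The REINFORCE parameter update
`θ' = θ + (η/B)·Σ_b Σ_s ∇_θ log π_θ(y_s^{(b)} | x_{s−1}^{(b)})` on a batch `bs`. -/
def update (γ : ℝ) (σ : Fin J → List V → V)
    (h : Fin S → Fin J → EuclideanSpace ℝ P) (η : ℝ)
    (θ : EuclideanSpace ℝ P) (bs : Fin Bsz → Traj V S) : EuclideanSpace ℝ P :=
  θ + (η / (Bsz : ℝ)) • ∑ b : Fin Bsz, ∑ s : Fin S,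
    gradient (fun θ' => Real.log (policy γ σ h θ' s (pref (bs b) s.val) ((bs b).2 s))) θ

/-- Density of a single trajectory of the training batch: a draw from `P_θ`
conditioned on the verifier accepting. -/
def condDens (D : List V → ℝ) (γ : ℝ) (σ : Fin J → List V → V)
    (h : Fin S → Fin J → EuclideanSpace ℝ P) (Verif : List V → Bool)
    (θ : EuclideanSpace ℝ P) (ω : Traj V S) : ℝ :=
  Set.indicator (VE Verif) (dens D γ σ h θ) ω / Pr D γ σ h θ (VE Verif)

/-- Expectation, over an i.i.d. batch of `Bsz` positive samples
(drawn from `P_θ(· | V = 1)`), of a function of the batch. -/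
def Ebatch (D : List V → ℝ) (γ : ℝ) (σ : Fin J → List V → V)
    (h : Fin S → Fin J → EuclideanSpace ℝ P) (Verif : List V → Bool)
    (θ : EuclideanSpace ℝ P) (F : (Fin Bsz → Traj V S) → ℝ) : ℝ :=
  ∑' bs : Fin Bsz → Traj V S, (∏ b : Fin Bsz, condDens D γ σ h Verif θ (bs b)) * F bs

/-- The empirical discrepancy
`Q_{s,j} = (1/B)·Σ_b (1[y_s^{(b)} = σ_j(x_{s−1}^{(b)})] − π_θ(σ_j(x_{s−1}^{(b)}) | x_{s−1}^{(b)}))`. -/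
def Q (γ : ℝ) (σ : Fin J → List V → V)
    (h : Fin S → Fin J → EuclideanSpace ℝ P) (θ : EuclideanSpace ℝ P)
    (bs : Fin Bsz → Traj V S) (s : Fin S) (j : Fin J) : ℝ :=
  (1 / (Bsz : ℝ)) * ∑ b : Fin Bsz,
    ((if (bs b).2 s = σ j (pref (bs b) s.val) then (1 : ℝ) else 0)
      - policy γ σ h θ s (pref (bs b) s.val) (σ j (pref (bs b) s.val)))

/-- The first `n` steps of the ground-truth chain of thought started at prompt `x0`:
apply `σ_{τ(1)}, …, σ_{τ(n)}` autoregressively. -/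
def fstarPref (σ : Fin J → List V → V) (τ : Fin S → Fin J) (x0 : List V)
    (n : ℕ) : List V :=
  ((List.finRange S).take n).foldl (fun acc s => acc ++ [σ (τ s) acc]) x0

/-- The target function `f*`: the full ground-truth chain of thought. -/
def fstar (σ : Fin J → List V → V) (τ : Fin S → Fin J) (x0 : List V) : List V :=
  fstarPref σ τ x0 S

/-- `P_θ(f*(x0) | x0)`: the probability of generating exactly the ground-truth
completion from prompt `x0` (chain rule of probability). -/
def targetProb (γ : ℝ) (σ : Fin J → List V → V)
    (h : Fin S → Fin J → EuclideanSpace ℝ P) (τ : Fin S → Fin J)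
    (θ : EuclideanSpace ℝ P) (x0 : List V) : ℝ :=
  ∏ s : Fin S, policy γ σ h θ s (fstarPref σ τ x0 s.val) (σ (τ s) (fstarPref σ τ x0 s.val))

/-- The cross-entropy loss `L(θ) = E_{x0∼D}[log(1/P_θ(f*(x0) | x0))]`. -/
def celoss (D : List V → ℝ) (γ : ℝ) (σ : Fin J → List V → V)
    (h : Fin S → Fin J → EuclideanSpace ℝ P) (τ : Fin S → Fin J)
    (θ : EuclideanSpace ℝ P) : ℝ :=
  ∑' x0 : List V, D x0 * Real.log (1 / targetProb γ σ h τ θ x0)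

/-- The training iterates: `θ^{(0)} = θ0` and
`θ^{(t+1)} = update(θ^{(t)}, batch t)`. -/
def thetaSeq (γ : ℝ) (σ : Fin J → List V → V)
    (h : Fin S → Fin J → EuclideanSpace ℝ P) (η : ℝ) (θ0 : EuclideanSpace ℝ P)
    (ω : ℕ → Fin Bsz → Traj V S) : ℕ → EuclideanSpace ℝ P
  | 0 => θ0
  | t + 1 => update γ σ h η (thetaSeq γ σ h η θ0 ω t) (ω t)

/-- Extension of a finite-horizon family of batches to all times. -/
def extendBatches (T : ℕ) (ωf : Fin T → Fin Bsz → Traj V S) :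
    ℕ → Fin Bsz → Traj V S :=
  fun t => if ht : t < T then ωf ⟨t, ht⟩ else fun _ => ([], fun _ => Classical.arbitrary V)

/-- Density of the whole training run over horizon `T`: at each iteration `t` the
batch is drawn i.i.d. from `P_{θ^{(t)}}(· | V = 1)`. -/
def trainDens (D : List V → ℝ) (γ : ℝ) (σ : Fin J → List V → V)
    (h : Fin S → Fin J → EuclideanSpace ℝ P) (Verif : List V → Bool) (η : ℝ)
    (θ0 : EuclideanSpace ℝ P) (T : ℕ) (ωf : Fin T → Fin Bsz → Traj V S) : ℝ :=
  ∏ t : Fin T, ∏ b : Fin Bsz,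
    condDens D γ σ h Verif (thetaSeq γ σ h η θ0 (extendBatches T ωf) t.val) (ωf t b)

/-- Probability, over the training randomness up to horizon `T`, of an event on the
batches. -/
def PrTrain (D : List V → ℝ) (γ : ℝ) (σ : Fin J → List V → V)
    (h : Fin S → Fin J → EuclideanSpace ℝ P) (Verif : List V → Bool) (η : ℝ)
    (θ0 : EuclideanSpace ℝ P) (T : ℕ)
    (E : Set (Fin T → Fin Bsz → Traj V S)) : ℝ :=
  ∑' ωf : Fin T → Fin Bsz → Traj V S,
    Set.indicator E (trainDens D γ σ h Verif η θ0 T) ωf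

end RLVR

section Aux
open RLVR
set_option linter.unusedSectionVars false

variable {V : Type*} [Fintype V] [DecidableEq V] [Nonempty V]
variable {P : Type*} [Fintype P]
variable {J S Bsz : ℕ}

lemma sum_exp_pos (L : V → ℝ) : 0 < ∑ w, Real.exp (L w) :=
  Finset.sum_pos (fun w _ => Real.exp_pos _) Finset.univ_nonempty

lemma softmax_nonneg (L : V → ℝ) (y : V) : 0 ≤ softmax L y :=
  div_nonneg (Real.exp_pos _).le (sum_exp_pos L).le

lemma softmax_le_one (L : V → ℝ) (y : V) : softmax L y ≤ 1 := by
  rw [softmax, div_le_one (sum_exp_pos L)]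
  exact Finset.single_le_sum (fun w _ => (Real.exp_pos _).le) (Finset.mem_univ y)

lemma sum_softmax (L : V → ℝ) : ∑ y, softmax L y = 1 := by
  rw [show (∑ y, softmax L y) = (∑ y, Real.exp (L y)) / ∑ w, Real.exp (L w) by
    rw [Finset.sum_div]; rfl]
  exact div_self (sum_exp_pos L).ne'

lemma sum_policy (γ : ℝ) (σ : Fin J → List V → V) (h : Fin S → Fin J → EuclideanSpace ℝ P)
    (θ : EuclideanSpace ℝ P) (s : Fin S) (x : List V) :
    ∑ v, policy γ σ h θ s x v = 1 := sum_softmax _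

lemma model_target (γ : ℝ) (σ : Fin J → List V → V)
    (hσ : ∀ j j' : Fin J, j ≠ j' → ∀ x : List V, σ j x ≠ σ j' x)
    (h : Fin S → Fin J → EuclideanSpace ℝ P) (θ : EuclideanSpace ℝ P)
    (s : Fin S) (j : Fin J) (x : List V) :
    model γ σ h θ s x (σ j x) = γ * ⟪h s j, θ⟫ := by
  rw [model, Finset.sum_eq_single j]
  · rw [if_pos rfl]
  · intro j' _ hne
    rw [if_neg (hσ j' j hne x), zero_mul]
  · intro hj; exact absurd (Finset.mem_univ j) hj

lemma card_le (σ : Fin J → List V → V)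
    (hσ : ∀ j j' : Fin J, j ≠ j' → ∀ x : List V, σ j x ≠ σ j' x) :
    J ≤ Fintype.card V := by
  have hinj : Function.Injective (fun j : Fin J => σ j []) := by
    intro a b hab
    by_contra hne
    exact hσ a b hne [] hab
  simpa using Fintype.card_le_of_injective _ hinj

lemma sum_exp_model (γ : ℝ) (σ : Fin J → List V → V)
    (hσ : ∀ j j' : Fin J, j ≠ j' → ∀ x : List V, σ j x ≠ σ j' x)
    (h : Fin S → Fin J → EuclideanSpace ℝ P) (θ : EuclideanSpace ℝ P)
    (s : Fin S) (x : List V) :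
    ∑ w, Real.exp (model γ σ h θ s x w)
      = (∑ j' : Fin J, Real.exp (γ * ⟪h s j', θ⟫)) + ((Fintype.card V : ℝ) - J) := by
  classical
  set T : Finset V := Finset.image (fun j' => σ j' x) Finset.univ with hT
  have hinj : Function.Injective (fun j' : Fin J => σ j' x) := by
    intro a b hab
    by_contra hne
    exact hσ a b hne x hab
  have hTcard : T.card = J := by
    rw [hT, Finset.card_image_of_injective _ hinj, Finset.card_univ, Fintype.card_fin]
  have h1 : ∑ w ∈ T, Real.exp (model γ σ h θ s x w) = ∑ j' : Fin J, Real.exp (γ * ⟪h s j', θ⟫) := by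
    rw [hT, Finset.sum_image (fun a _ b _ hab => hinj hab)]
    exact Finset.sum_congr rfl fun j' _ => by rw [model_target γ σ hσ h θ s j' x]
  have h2 : ∑ w ∈ Tᶜ, Real.exp (model γ σ h θ s x w) = (Fintype.card V : ℝ) - J := by
    have hzero : ∀ w ∈ Tᶜ, Real.exp (model γ σ h θ s x w) = 1 := by
      intro w hw
      have hnot : ∀ j' : Fin J, σ j' x ≠ w := by
        intro j' hj'
        apply Finset.mem_compl.1 hw
        rw [hT, ← hj']
        exact Finset.mem_image_of_mem _ (Finset.mem_univ j')
      rw [show model γ σ h θ s x w = 0 by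
        rw [model]
        refine Finset.sum_eq_zero fun j' _ => ?_
        rw [if_neg (hnot j'), zero_mul], Real.exp_zero]
    rw [Finset.sum_congr rfl hzero, Finset.sum_const, nsmul_eq_mul, mul_one,
      Finset.card_compl, hTcard]
    have := card_le σ hσ
    push_cast [this]
    ring
  rw [← Finset.sum_add_sum_compl T, h1, h2]

lemma policy_target_const (γ : ℝ) (σ : Fin J → List V → V)
    (hσ : ∀ j j' : Fin J, j ≠ j' → ∀ x : List V, σ j x ≠ σ j' x)
    (h : Fin S → Fin J → EuclideanSpace ℝ P) (θ : EuclideanSpace ℝ P)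
    (s : Fin S) (j : Fin J) (x : List V) :
    policy γ σ h θ s x (σ j x)
      = Real.exp (γ * ⟪h s j, θ⟫) /
        ((∑ j' : Fin J, Real.exp (γ * ⟪h s j', θ⟫)) + ((Fintype.card V : ℝ) - J)) := by
  rw [policy, softmax, model_target γ σ hσ h θ s j x, sum_exp_model γ σ hσ h θ s x]

lemma chain0 (n : ℕ) : ∀ (K : Fin n → List V → V → ℝ),
    (∀ i x, ∑ v, K i x v = 1) → ∀ x0 : List V,
    (∑ y : Fin n → V, ∏ i, K i (x0 ++ (List.ofFn y).take i.val) (y i)) = 1 := by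
  induction n with
  | zero => intro K hK x0; simp
  | succ n ih =>
    intro K hK x0
    rw [← Equiv.sum_comp (Fin.consEquiv (fun _ : Fin (n+1) => V))
        (fun y : Fin (n+1) → V => ∏ i, K i (x0 ++ (List.ofFn y).take i.val) (y i)),
      Fintype.sum_prod_type]
    have key : ∀ (v : V) (y' : Fin n → V),
        (∏ i : Fin (n+1), K i (x0 ++ (List.ofFn (Fin.cons v y' : ∀ _ : Fin (n+1), V)).take i.val)
          ((Fin.cons v y' : ∀ _ : Fin (n+1), V) i))
        = K 0 x0 v * ∏ i : Fin n, K i.succ ((x0 ++ [v]) ++ (List.ofFn y').take i.val) (y' i) := by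
      intro v y'
      rw [Fin.prod_univ_succ]
      congr 1
      · simp
      · refine Finset.prod_congr rfl fun i _ => ?_
        have : (List.ofFn (Fin.cons v y' : ∀ _ : Fin (n+1), V)).take (i.succ.val)
            = v :: (List.ofFn y').take i.val := by
          simp [List.ofFn_succ, Fin.val_succ]
        rw [this, Fin.cons_succ, ← List.append_cons]
    calc (∑ v, ∑ y' : Fin n → V,
          (fun y : Fin (n+1) → V => ∏ i, K i (x0 ++ (List.ofFn y).take i.val) (y i))
            ((Fin.consEquiv (fun _ : Fin (n+1) => V)) (v, y')))
        = ∑ v, K 0 x0 v * ∑ y' : Fin n → V,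
            ∏ i : Fin n, K i.succ ((x0 ++ [v]) ++ (List.ofFn y').take i.val) (y' i) := by
          refine Finset.sum_congr rfl fun v _ => ?_
          rw [Finset.mul_sum]
          exact Finset.sum_congr rfl fun y' _ => key v y'
      _ = ∑ v, K 0 x0 v := by
          refine Finset.sum_congr rfl fun v _ => ?_
          rw [ih (fun i x => K i.succ x) (fun i x => hK i.succ x) (x0 ++ [v]), mul_one]
      _ = 1 := hK 0 x0

lemma chain1 (n : ℕ) : ∀ (K : Fin n → List V → V → ℝ),
    (∀ i x, ∑ v, K i x v = 1) → ∀ (s0 : Fin n) (t : List V → V) (p : ℝ),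
    (∀ x, K s0 x (t x) = p) → ∀ x0 : List V,
    (∑ y : Fin n → V, (if y s0 = t (x0 ++ (List.ofFn y).take s0.val) then (1:ℝ) else 0) *
      ∏ i, K i (x0 ++ (List.ofFn y).take i.val) (y i)) = p := by
  induction n with
  | zero => intro K hK s0; exact s0.elim0
  | succ n ih =>
    intro K hK s0 t p hp x0
    rw [← Equiv.sum_comp (Fin.consEquiv (fun _ : Fin (n+1) => V))
        (fun y : Fin (n+1) → V => (if y s0 = t (x0 ++ (List.ofFn y).take s0.val) then (1:ℝ) else 0) *
          ∏ i, K i (x0 ++ (List.ofFn y).take i.val) (y i)),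
      Fintype.sum_prod_type]
    have keyP : ∀ (v : V) (y' : Fin n → V),
        (∏ i : Fin (n+1), K i (x0 ++ (List.ofFn (Fin.cons v y' : ∀ _ : Fin (n+1), V)).take i.val)
          ((Fin.cons v y' : ∀ _ : Fin (n+1), V) i))
        = K 0 x0 v * ∏ i : Fin n, K i.succ ((x0 ++ [v]) ++ (List.ofFn y').take i.val) (y' i) := by
      intro v y'
      rw [Fin.prod_univ_succ]
      congr 1
      · simp
      · refine Finset.prod_congr rfl fun i _ => ?_
        have : (List.ofFn (Fin.cons v y' : ∀ _ : Fin (n+1), V)).take (i.succ.val)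
            = v :: (List.ofFn y').take i.val := by
          simp [List.ofFn_succ, Fin.val_succ]
        rw [this, Fin.cons_succ, ← List.append_cons]
    induction s0 using Fin.cases with
    | zero =>
      have step : ∀ v : V, (∑ y' : Fin n → V,
          (if (Fin.cons v y' : ∀ _ : Fin (n+1), V) 0 = t (x0 ++ (List.ofFn (Fin.cons v y' : ∀ _ : Fin (n+1), V)).take (0:Fin (n+1)).val) then (1:ℝ) else 0) *
            ∏ i, K i (x0 ++ (List.ofFn (Fin.cons v y' : ∀ _ : Fin (n+1), V)).take i.val) ((Fin.cons v y' : ∀ _ : Fin (n+1), V) i))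
          = (if v = t x0 then (1:ℝ) else 0) * K 0 x0 v := by
        intro v
        have : ∀ y' : Fin n → V,
            (if (Fin.cons v y' : ∀ _ : Fin (n+1), V) 0 = t (x0 ++ (List.ofFn (Fin.cons v y' : ∀ _ : Fin (n+1), V)).take (0:Fin (n+1)).val) then (1:ℝ) else 0) *
            ∏ i, K i (x0 ++ (List.ofFn (Fin.cons v y' : ∀ _ : Fin (n+1), V)).take i.val) ((Fin.cons v y' : ∀ _ : Fin (n+1), V) i)
            = (if v = t x0 then (1:ℝ) else 0) * (K 0 x0 v *
              ∏ i : Fin n, K i.succ ((x0 ++ [v]) ++ (List.ofFn y').take i.val) (y' i)) := by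
          intro y'
          rw [keyP v y']
          congr 1
          simp
        rw [Finset.sum_congr rfl fun y' _ => this y', ← Finset.mul_sum, ← Finset.mul_sum,
          chain0 n (fun i x => K i.succ x) (fun i x => hK i.succ x) (x0 ++ [v]), mul_one]
      calc _ = ∑ v, (if v = t x0 then (1:ℝ) else 0) * K 0 x0 v := by
            refine Finset.sum_congr rfl fun v _ => ?_
            exact step v
        _ = K 0 x0 (t x0) := by simp
        _ = p := hp x0
    | succ s0' =>
      have step : ∀ v : V, (∑ y' : Fin n → V,
          (if (Fin.cons v y' : ∀ _ : Fin (n+1), V) s0'.succ = t (x0 ++ (List.ofFn (Fin.cons v y' : ∀ _ : Fin (n+1), V)).take (s0'.succ).val) then (1:ℝ) else 0) *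
            ∏ i, K i (x0 ++ (List.ofFn (Fin.cons v y' : ∀ _ : Fin (n+1), V)).take i.val) ((Fin.cons v y' : ∀ _ : Fin (n+1), V) i))
          = K 0 x0 v * p := by
        intro v
        have hcast : ∀ y' : Fin n → V,
            (if (Fin.cons v y' : ∀ _ : Fin (n+1), V) s0'.succ = t (x0 ++ (List.ofFn (Fin.cons v y' : ∀ _ : Fin (n+1), V)).take (s0'.succ).val) then (1:ℝ) else 0) *
            ∏ i, K i (x0 ++ (List.ofFn (Fin.cons v y' : ∀ _ : Fin (n+1), V)).take i.val) ((Fin.cons v y' : ∀ _ : Fin (n+1), V) i)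
            = K 0 x0 v * ((if y' s0' = t ((x0 ++ [v]) ++ (List.ofFn y').take s0'.val) then (1:ℝ) else 0) *
              ∏ i : Fin n, K i.succ ((x0 ++ [v]) ++ (List.ofFn y').take i.val) (y' i)) := by
          intro y'
          rw [keyP v y']
          have htk : (List.ofFn (Fin.cons v y' : ∀ _ : Fin (n+1), V)).take ((s0'.succ).val)
              = v :: (List.ofFn y').take s0'.val := by
            simp [List.ofFn_succ, Fin.val_succ]
          rw [htk, Fin.cons_succ, ← List.append_cons]
          ring
        rw [Finset.sum_congr rfl fun y' _ => hcast y', ← Finset.mul_sum,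
          ih (fun i x => K i.succ x) (fun i x => hK i.succ x) s0' t p (fun x => hp x) (x0 ++ [v])]
      calc _ = ∑ v, K 0 x0 v * p := Finset.sum_congr rfl fun v _ => step v
        _ = p := by rw [← Finset.sum_mul, hK 0 x0, one_mul]

end Aux

section Aux2
open RLVR
set_option linter.unusedSectionVars false
variable {V : Type*} [Fintype V] [DecidableEq V] [Nonempty V]
variable {P : Type*} [Fintype P]
variable {J S Bsz : ℕ}

lemma dens_nonneg (D : List V → ℝ) (hD0 : ∀ x, 0 ≤ D x) (γ : ℝ) (σ : Fin J → List V → V)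
    (h : Fin S → Fin J → EuclideanSpace ℝ P) (θ : EuclideanSpace ℝ P) (ω : Traj V S) :
    0 ≤ dens D γ σ h θ ω :=
  mul_nonneg (hD0 _) (Finset.prod_nonneg fun s _ => softmax_nonneg _ _)

lemma Pr_Av (D : List V → ℝ) (hD0 : ∀ x, 0 ≤ D x) (hD1 : ∑' x : List V, D x = 1)
    (γ : ℝ) (σ : Fin J → List V → V)
    (hσ : ∀ j j' : Fin J, j ≠ j' → ∀ x : List V, σ j x ≠ σ j' x)
    (h : Fin S → Fin J → EuclideanSpace ℝ P) (θ : EuclideanSpace ℝ P)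
    (s : Fin S) (j : Fin J) :
    Pr D γ σ h θ (Av σ s j)
      = Real.exp (γ * ⟪h s j, θ⟫) /
        ((∑ j' : Fin J, Real.exp (γ * ⟪h s j', θ⟫)) + ((Fintype.card V : ℝ) - J)) := by
  classical
  set p : ℝ := Real.exp (γ * ⟪h s j, θ⟫) /
      ((∑ j' : Fin J, Real.exp (γ * ⟪h s j', θ⟫)) + ((Fintype.card V : ℝ) - J)) with hp
  have hconst : ∀ x, policy γ σ h θ s x (σ j x) = p := fun x =>
    policy_target_const γ σ hσ h θ s j x
  set f : Traj V S → ℝ := Set.indicator (Av σ s j) (dens D γ σ h θ) with hf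
  have hfapp : ∀ ω : Traj V S, f ω
      = D ω.1 * ((if ω.2 s = σ j (ω.1 ++ (List.ofFn ω.2).take s.val) then (1:ℝ) else 0) *
          ∏ i, policy γ σ h θ i (ω.1 ++ (List.ofFn ω.2).take i.val) (ω.2 i)) := by
    intro ω
    rw [hf, Set.indicator_apply]
    by_cases hmem : ω ∈ Av σ s j
    · rw [if_pos hmem, dens]
      have : ω.2 s = σ j (ω.1 ++ (List.ofFn ω.2).take s.val) := hmem
      rw [if_pos this, one_mul]
      rfl
    · rw [if_neg hmem, if_neg (by exact hmem), zero_mul, mul_zero]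
  have hfiber : ∀ x0 : List V, (∑ y : Fin S → V, f (x0, y)) = D x0 * p := by
    intro x0
    rw [show (∑ y : Fin S → V, f (x0, y))
        = ∑ y : Fin S → V, D x0 * ((if y s = σ j (x0 ++ (List.ofFn y).take s.val) then (1:ℝ) else 0) *
            ∏ i, policy γ σ h θ i (x0 ++ (List.ofFn y).take i.val) (y i))
      from Finset.sum_congr rfl fun y _ => hfapp (x0, y), ← Finset.mul_sum]
    congr 1
    exact chain1 S (fun i x v => policy γ σ h θ i x v)
      (fun i x => sum_policy γ σ h θ i x) s (fun x => σ j x) p hconst x0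
  have hnn : ∀ ω : Traj V S, 0 ≤ f ω :=
    fun ω => Set.indicator_nonneg (fun ω' _ => dens_nonneg D hD0 γ σ h θ ω') ω
  have hDsum : Summable D := by
    by_contra hns
    rw [tsum_eq_zero_of_not_summable hns] at hD1
    norm_num at hD1
  have hsum : Summable f := by
    refine (summable_prod_of_nonneg hnn).2 ⟨fun x0 => ?_, ?_⟩
    · exact Summable.of_finite
    · have : (fun x0 => ∑' y : Fin S → V, f (x0, y)) = fun x0 => D x0 * p := by
        funext x0
        rw [tsum_fintype, hfiber x0]
      rw [this]
      exact hDsum.mul_right p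
  calc Pr D γ σ h θ (Av σ s j) = ∑' ω : Traj V S, f ω := rfl
    _ = ∑' x0 : List V, ∑' y : Fin S → V, f (x0, y) := Summable.tsum_prod' hsum (fun x0 => Summable.of_finite)
    _ = ∑' x0 : List V, D x0 * p := by
        refine tsum_congr fun x0 => ?_
        rw [tsum_fintype, hfiber x0]
    _ = 1 * p := by rw [tsum_mul_right, hD1]
    _ = p := one_mul p
end Aux2

section Aux3
open RLVR
set_option linter.unusedSectionVars false
variable {V : Type*} [Fintype V] [DecidableEq V] [Nonempty V]
variable {P : Type*} [Fintype P]
variable {J S Bsz : ℕ}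

lemma inner_grad_log_policy (γ : ℝ) (σ : Fin J → List V → V)
    (hσ : ∀ j j' : Fin J, j ≠ j' → ∀ x : List V, σ j x ≠ σ j' x)
    (h : Fin S → Fin J → EuclideanSpace ℝ P)
    (hh : Orthonormal ℝ fun sj : Fin S × Fin J => h sj.1 sj.2)
    (θ : EuclideanSpace ℝ P) (s' s : Fin S) (j : Fin J) (x : List V) (y : V) :
    ⟪h s j, gradient (fun θ' => Real.log (policy γ σ h θ' s' x y)) θ⟫
      = if s' = s then γ * ((if y = σ j x then (1:ℝ) else 0)
          - policy γ σ h θ s' x (σ j x)) else 0 := by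
  classical
  set u : V → EuclideanSpace ℝ P :=
    fun v => ∑ j' : Fin J, (if σ j' x = v then γ else 0) • h s' j' with hu
  have hmodel : ∀ (θ' : EuclideanSpace ℝ P) (v : V), model γ σ h θ' s' x v = ⟪u v, θ'⟫ := by
    intro θ' v
    rw [hu, model]
    rw [sum_inner]
    exact Finset.sum_congr rfl fun j' _ => (real_inner_smul_left _ _ _).symm
  set Z : EuclideanSpace ℝ P → ℝ := fun θ' => ∑ w, Real.exp (⟪u w, θ'⟫) with hZ
  have hZpos : ∀ θ', 0 < Z θ' := fun θ' => Finset.sum_pos (fun w _ => Real.exp_pos _)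
    Finset.univ_nonempty
  have hfun : (fun θ' => Real.log (policy γ σ h θ' s' x y))
      = fun θ' => ⟪u y, θ'⟫ - Real.log (Z θ') := by
    funext θ'
    rw [policy, softmax, Real.log_div (Real.exp_ne_zero _) (sum_exp_pos _).ne',
      Real.log_exp, hmodel θ' y]
    congr 1
    simp only [hZ, hmodel]
  -- derivative computations
  have h1 : HasFDerivAt (fun θ' : EuclideanSpace ℝ P => (⟪u y, θ'⟫ : ℝ))
      (innerSL ℝ (u y)) θ := by
    have := (innerSL ℝ (u y)).hasFDerivAt (x := θ)
    simpa using this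
  have hZder : HasFDerivAt Z
      (∑ w, Real.exp (⟪u w, θ⟫) • (innerSL ℝ (u w) : EuclideanSpace ℝ P →L[ℝ] ℝ)) θ := by
    rw [hZ]
    refine HasFDerivAt.fun_sum fun w _ => ?_
    have hlin : HasFDerivAt (fun θ' : EuclideanSpace ℝ P => (⟪u w, θ'⟫ : ℝ))
        (innerSL ℝ (u w)) θ := by
      have := (innerSL ℝ (u w)).hasFDerivAt (x := θ)
      simpa using this
    have := (Real.hasDerivAt_exp (⟪u w, θ⟫)).comp_hasFDerivAt θ hlin
    exact this
  have hlog : HasFDerivAt (fun θ' => Real.log (Z θ'))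
      ((Z θ)⁻¹ • (∑ w, Real.exp (⟪u w, θ⟫) • (innerSL ℝ (u w) : EuclideanSpace ℝ P →L[ℝ] ℝ))) θ := by
    have := (Real.hasDerivAt_log (hZpos θ).ne').comp_hasFDerivAt θ hZder
    exact this
  have hF : HasFDerivAt (fun θ' => Real.log (policy γ σ h θ' s' x y))
      (innerSL ℝ (u y) - (Z θ)⁻¹ • (∑ w, Real.exp (⟪u w, θ⟫) • (innerSL ℝ (u w) : EuclideanSpace ℝ P →L[ℝ] ℝ))) θ := by
    rw [hfun]
    exact h1.sub hlog
  -- inner with gradient = fderiv applied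
  have hkey : ⟪h s j, gradient (fun θ' => Real.log (policy γ σ h θ' s' x y)) θ⟫
      = (fderiv ℝ (fun θ' => Real.log (policy γ σ h θ' s' x y)) θ) (h s j) := by
    rw [real_inner_comm, gradient, ← InnerProductSpace.toDual_apply_apply,
      LinearIsometryEquiv.apply_symm_apply]
  rw [hkey, hF.fderiv]
  -- compute inner products with u
  have hinner_u : ∀ v, (⟪u v, h s j⟫ : ℝ)
      = if s' = s then (if σ j x = v then γ else 0) else 0 := by
    intro v
    rw [hu, sum_inner]
    have horth : ∀ j' : Fin J, (⟪h s' j', h s j⟫ : ℝ) = if (s', j') = (s, j) then 1 else 0 := by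
      intro j'
      have := orthonormal_iff_ite.mp hh (s', j') (s, j)
      simpa using this
    by_cases hs : s' = s
    · subst hs
      rw [if_pos rfl, Finset.sum_eq_single j]
      · rw [real_inner_smul_left, horth j, if_pos rfl, mul_one]
      · intro j' _ hne
        rw [real_inner_smul_left, horth j']
        simp [hne]
      · intro hj; exact absurd (Finset.mem_univ j) hj
    · rw [if_neg hs]
      refine Finset.sum_eq_zero fun j' _ => ?_
      rw [real_inner_smul_left, horth j']
      simp [hs]
  have happly : (innerSL ℝ (u y) - (Z θ)⁻¹ • (∑ w, Real.exp (⟪u w, θ⟫) • (innerSL ℝ (u w) : EuclideanSpace ℝ P →L[ℝ] ℝ))) (h s j)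
      = ⟪u y, h s j⟫ - (Z θ)⁻¹ * ∑ w, Real.exp (⟪u w, θ⟫) * ⟪u w, h s j⟫ := by
    simp only [ContinuousLinearMap.sub_apply, ContinuousLinearMap.smul_apply,
      ContinuousLinearMap.coe_sum', Finset.sum_apply, innerSL_apply_apply, smul_eq_mul,
      Finset.mul_sum]
  rw [happly]
  by_cases hs : s' = s
  · subst hs
    rw [if_pos rfl]
    have hsum : (∑ w, Real.exp (⟪u w, θ⟫) * ⟪u w, h s' j⟫)
        = γ * Real.exp (⟪u (σ j x), θ⟫) := by
      rw [Finset.sum_eq_single (σ j x)]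
      · rw [hinner_u (σ j x), if_pos rfl, if_pos rfl]; ring
      · intro w _ hne
        rw [hinner_u w, if_pos rfl, if_neg (fun hc => hne hc.symm), mul_zero]
      · intro hw; exact absurd (Finset.mem_univ _) hw
    rw [hsum, hinner_u y, if_pos rfl]
    have hpol : policy γ σ h θ s' x (σ j x) = Real.exp (⟪u (σ j x), θ⟫) / Z θ := by
      rw [policy, softmax, hmodel θ (σ j x), hZ]
      congr 1
      exact Finset.sum_congr rfl fun w _ => by rw [hmodel θ w]
    rw [hpol]
    by_cases hxy : y = σ j x
    · rw [if_pos hxy.symm, if_pos hxy]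
      ring
    · rw [if_neg (fun hc => hxy hc.symm), if_neg hxy]
      ring
  · rw [if_neg hs, hinner_u y, if_neg hs]
    rw [show (∑ w, Real.exp (⟪u w, θ⟫) * ⟪u w, h s j⟫) = 0 from
      Finset.sum_eq_zero fun w _ => by rw [hinner_u w, if_neg hs, mul_zero]]
    ring
end Aux3

section Aux4
open RLVR
set_option linter.unusedSectionVars false
variable {V : Type*} [Fintype V] [DecidableEq V] [Nonempty V]
variable {P : Type*} [Fintype P]
variable {J S Bsz : ℕ}

lemma inner_update (γ : ℝ) (σ : Fin J → List V → V)
    (hσ : ∀ j j' : Fin J, j ≠ j' → ∀ x : List V, σ j x ≠ σ j' x)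
    (h : Fin S → Fin J → EuclideanSpace ℝ P)
    (hh : Orthonormal ℝ fun sj : Fin S × Fin J => h sj.1 sj.2)
    (η : ℝ) (θ : EuclideanSpace ℝ P) (bs : Fin Bsz → Traj V S) (s : Fin S) (j : Fin J) :
    ⟪h s j, update γ σ h η θ bs⟫
      = ⟪h s j, θ⟫ + (η / (Bsz : ℝ)) * ∑ b : Fin Bsz,
          γ * ((if (bs b).2 s = σ j (pref (bs b) s.val) then (1:ℝ) else 0)
            - policy γ σ h θ s (pref (bs b) s.val) (σ j (pref (bs b) s.val))) := by
  rw [update, inner_add_right, real_inner_smul_right]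
  congr 1
  rw [inner_sum]
  refine congrArg _ (Finset.sum_congr rfl fun b _ => ?_)
  rw [inner_sum]
  rw [Finset.sum_congr rfl fun s' _ =>
    inner_grad_log_policy γ σ hσ h hh θ s' s j (pref (bs b) s'.val) ((bs b).2 s')]
  rw [Finset.sum_ite_eq' Finset.univ s
    (fun s' => γ * ((if (bs b).2 s' = σ j (pref (bs b) s'.val) then (1:ℝ) else 0)
      - policy γ σ h θ s' (pref (bs b) s'.val) (σ j (pref (bs b) s'.val)))), if_pos (Finset.mem_univ s)]

lemma abs_inner_update (γ : ℝ) (hγ : 0 < γ) (σ : Fin J → List V → V)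
    (hσ : ∀ j j' : Fin J, j ≠ j' → ∀ x : List V, σ j x ≠ σ j' x)
    (h : Fin S → Fin J → EuclideanSpace ℝ P)
    (hh : Orthonormal ℝ fun sj : Fin S × Fin J => h sj.1 sj.2)
    (η : ℝ) (hη : 0 < η) (hBsz : 0 < Bsz)
    (θ : EuclideanSpace ℝ P) (bs : Fin Bsz → Traj V S) (s : Fin S) (j : Fin J) :
    |⟪h s j, update γ σ h η θ bs⟫ - ⟪h s j, θ⟫| ≤ η * γ := by
  rw [inner_update γ σ hσ h hh η θ bs s j, add_sub_cancel_left, abs_mul]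
  have hB : (0:ℝ) < (Bsz : ℝ) := by exact_mod_cast hBsz
  have habs1 : |η / (Bsz : ℝ)| = η / (Bsz : ℝ) := abs_of_pos (div_pos hη hB)
  have hterm : ∀ b : Fin Bsz,
      |γ * ((if (bs b).2 s = σ j (pref (bs b) s.val) then (1:ℝ) else 0)
        - policy γ σ h θ s (pref (bs b) s.val) (σ j (pref (bs b) s.val)))| ≤ γ := by
    intro b
    rw [abs_mul, abs_of_pos hγ]
    have h0 : 0 ≤ policy γ σ h θ s (pref (bs b) s.val) (σ j (pref (bs b) s.val)) :=
      softmax_nonneg _ _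
    have h1 : policy γ σ h θ s (pref (bs b) s.val) (σ j (pref (bs b) s.val)) ≤ 1 :=
      softmax_le_one _ _
    have : |(if (bs b).2 s = σ j (pref (bs b) s.val) then (1:ℝ) else 0)
        - policy γ σ h θ s (pref (bs b) s.val) (σ j (pref (bs b) s.val))| ≤ 1 := by
      rw [abs_le]
      constructor <;> [skip; skip] <;> split <;> simp <;> linarith
    calc γ * |(if (bs b).2 s = σ j (pref (bs b) s.val) then (1:ℝ) else 0)
        - policy γ σ h θ s (pref (bs b) s.val) (σ j (pref (bs b) s.val))|
        ≤ γ * 1 := by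
          exact mul_le_mul_of_nonneg_left this hγ.le
      _ = γ := mul_one γ
  calc |η / (Bsz : ℝ)| * |∑ b : Fin Bsz, γ * ((if (bs b).2 s = σ j (pref (bs b) s.val) then (1:ℝ) else 0)
        - policy γ σ h θ s (pref (bs b) s.val) (σ j (pref (bs b) s.val)))|
      ≤ (η / (Bsz : ℝ)) * ((Bsz : ℝ) * γ) := by
        rw [habs1]
        refine mul_le_mul_of_nonneg_left ?_ (div_pos hη hB).le
        calc |∑ b : Fin Bsz, γ * ((if (bs b).2 s = σ j (pref (bs b) s.val) then (1:ℝ) else 0)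
              - policy γ σ h θ s (pref (bs b) s.val) (σ j (pref (bs b) s.val)))|
            ≤ ∑ b : Fin Bsz, |γ * ((if (bs b).2 s = σ j (pref (bs b) s.val) then (1:ℝ) else 0)
              - policy γ σ h θ s (pref (bs b) s.val) (σ j (pref (bs b) s.val)))| :=
              Finset.abs_sum_le_sum_abs _ _
          _ ≤ ∑ _b : Fin Bsz, γ := Finset.sum_le_sum fun b _ => hterm b
          _ = (Bsz : ℝ) * γ := by rw [Finset.sum_const, nsmul_eq_mul, Finset.card_univ,
              Fintype.card_fin]
    _ = η * γ := by field_simp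
end Aux4

lemma frac_stab {a a' Z Z' ε : ℝ} (hε : 0 ≤ ε) (hZ : 0 < Z) (hZ' : 0 < Z')
    (hle : Real.exp a ≤ Z) (ha : a - ε ≤ a') (hZle : Z' ≤ Real.exp ε * Z) :
    Real.exp a / Z - 2 * ε ≤ Real.exp a' / Z' := by
  have h1 : Real.exp (a - ε) / (Real.exp ε * Z) ≤ Real.exp a' / Z' :=
    div_le_div₀ (Real.exp_pos a').le (Real.exp_le_exp.2 ha) hZ' hZle
  have h2 : Real.exp (a - ε) / (Real.exp ε * Z) = Real.exp (-(2*ε)) * (Real.exp a / Z) := by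
    have h3 : Real.exp (a - ε) = Real.exp (-(2*ε)) * Real.exp ε * Real.exp a := by
      rw [← Real.exp_add, ← Real.exp_add]; ring_nf
    rw [h3]; field_simp
  have h3 : 1 - 2*ε ≤ Real.exp (-(2*ε)) := by
    have := Real.add_one_le_exp (-(2*ε)); linarith
  have hp0 : 0 ≤ Real.exp a / Z := div_nonneg (Real.exp_pos a).le hZ.le
  have hp1 : Real.exp a / Z ≤ 1 := (div_le_one hZ).2 hle
  nlinarith [mul_le_mul_of_nonneg_right h3 hp0]

open RLVR in
/-- Lemma A.10 of the paper. If `η < 1/(4γ²)` then, surely (for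
every realization `ω` of the training batches) and at every iteration `t` and step
`s`, a single gradient step cannot decrease the probability of selecting the correct
task by more than `2ηγ²`:
`P_{t+1}(A_{s,τ(s)}) ≥ P_t(A_{s,τ(s)}) − 2ηγ²`. -/
theorem stmt16 {V : Type*} [Fintype V] [DecidableEq V] [Nonempty V]
    {P : Type*} [Fintype P] {J S Bsz : ℕ}
    (hS : 0 < S) (hJ : 0 < J) (hBsz : 0 < Bsz)
    (γ η : ℝ) (hγ : 0 < γ) (hη : 0 < η) (hηsmall : η < 1 / (4 * γ ^ 2))
    (σ : Fin J → List V → V)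
    (hσ : ∀ j j' : Fin J, j ≠ j' → ∀ x : List V, σ j x ≠ σ j' x)
    (h : Fin S → Fin J → EuclideanSpace ℝ P)
    (hh : Orthonormal ℝ fun sj : Fin S × Fin J => h sj.1 sj.2)
    (D : List V → ℝ) (hD0 : ∀ x, 0 ≤ D x) (hD1 : ∑' x : List V, D x = 1)
    (Verif : List V → Bool) (τ : Fin S → Fin J)
    (hA1 : ∀ x0 : List V, 0 < D x0 → Verif (fstar σ τ x0) = true)
    (θ0 : EuclideanSpace ℝ P) :
    ∀ (ω : ℕ → Fin Bsz → Traj V S) (t : ℕ) (s : Fin S),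
      Pr D γ σ h (thetaSeq γ σ h η θ0 ω (t + 1)) (Av σ s (τ s))
        ≥ Pr D γ σ h (thetaSeq γ σ h η θ0 ω t) (Av σ s (τ s)) - 2 * η * γ ^ 2 := by
  
  intro ω t s
  have hJV : J ≤ Fintype.card V := card_le σ hσ
  have hJne : Nonempty (Fin J) := ⟨⟨0, hJ⟩⟩
  set θt := thetaSeq γ σ h η θ0 ω t with hθt
  set θn := thetaSeq γ σ h η θ0 ω (t + 1) with hθn
  have hsucc : θn = update γ σ h η θt (ω t) := rfl
  rw [Pr_Av D hD0 hD1 γ σ hσ h θt s (τ s), Pr_Av D hD0 hD1 γ σ hσ h θn s (τ s)]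
  set ε : ℝ := η * γ ^ 2 with hε
  have hε0 : 0 ≤ ε := by positivity
  have hC : (0:ℝ) ≤ (Fintype.card V : ℝ) - J := by
    have : (J:ℝ) ≤ (Fintype.card V : ℝ) := by exact_mod_cast hJV
    linarith
  have hZ : (0:ℝ) < (∑ j' : Fin J, Real.exp (γ * ⟪h s j', θt⟫)) + ((Fintype.card V : ℝ) - J) := by
    have := Finset.sum_pos (fun (j' : Fin J) _ => Real.exp_pos (γ * ⟪h s j', θt⟫))
      Finset.univ_nonempty
    linarith
  have hZ' : (0:ℝ) < (∑ j' : Fin J, Real.exp (γ * ⟪h s j', θn⟫)) + ((Fintype.card V : ℝ) - J) := by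
    have := Finset.sum_pos (fun (j' : Fin J) _ => Real.exp_pos (γ * ⟪h s j', θn⟫))
      Finset.univ_nonempty
    linarith
  have hle : Real.exp (γ * ⟪h s (τ s), θt⟫)
      ≤ (∑ j' : Fin J, Real.exp (γ * ⟪h s j', θt⟫)) + ((Fintype.card V : ℝ) - J) := by
    have := Finset.single_le_sum (f := fun j' : Fin J => Real.exp (γ * ⟪h s j', θt⟫))
      (fun j' _ => (Real.exp_pos _).le) (Finset.mem_univ (τ s))
    linarith
  have hbound : ∀ j' : Fin J, |⟪h s j', θn⟫ - ⟪h s j', θt⟫| ≤ η * γ := by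
    intro j'
    rw [hsucc]
    exact abs_inner_update γ hγ σ hσ h hh η hη hBsz θt (ω t) s j'
  have ha : γ * ⟪h s (τ s), θt⟫ - ε ≤ γ * ⟪h s (τ s), θn⟫ := by
    have h1 := neg_le_of_abs_le (hbound (τ s))
    have h2 := mul_le_mul_of_nonneg_left h1 hγ.le
    rw [hε]
    nlinarith [h2]
  have hZle : (∑ j' : Fin J, Real.exp (γ * ⟪h s j', θn⟫)) + ((Fintype.card V : ℝ) - J)
      ≤ Real.exp ε * ((∑ j' : Fin J, Real.exp (γ * ⟪h s j', θt⟫)) + ((Fintype.card V : ℝ) - J)) := by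
    have hterm : ∀ j' : Fin J, Real.exp (γ * ⟪h s j', θn⟫)
        ≤ Real.exp ε * Real.exp (γ * ⟪h s j', θt⟫) := by
      intro j'
      rw [← Real.exp_add]
      apply Real.exp_le_exp.2
      have h1 := le_of_abs_le (hbound j')
      have h2 := mul_le_mul_of_nonneg_left h1 hγ.le
      rw [hε]
      nlinarith [h2]
    have hsum : (∑ j' : Fin J, Real.exp (γ * ⟪h s j', θn⟫))
        ≤ ∑ j' : Fin J, Real.exp ε * Real.exp (γ * ⟪h s j', θt⟫) :=
      Finset.sum_le_sum fun j' _ => hterm j'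
    have hone : (1:ℝ) ≤ Real.exp ε := Real.one_le_exp hε0
    have hCle : ((Fintype.card V : ℝ) - J) ≤ Real.exp ε * ((Fintype.card V : ℝ) - J) :=
      le_mul_of_one_le_left hC hone
    rw [← Finset.mul_sum] at hsum
    rw [mul_add]
    linarith
  have := frac_stab hε0 hZ hZ' hle ha hZle
  rw [ge_iff_le, hε] at *
  linarith
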